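/- Let c = a + ib with a, b ∈ ℝ, b ≠ 0, and q ∈ ℂ with Re(q)/b ∈ (1/2)ℤ and Im(q) + Re(q)·a/b ∉ ℤ. Then there exists K > 0 such that |k + cm - iq| ≥ K for all k ∈ ℤ and m ∈ (1/2)ℤ. -/

import Mathlib

open Complex Real

/-- If `b ≠ 0`, `Re(q)/b ∈ (1/2)ℤ` and `Im(q) + Re(q)·a/b ∉ ℤ`, then
`|k + cm - iq|` is uniformly bounded below over `k ∈ ℤ`, `m ∈ (1/2)ℤ`. -/
theorem uniform_lower_bound_of_halfInteger_not_int (a b : ℝ) (q : ℂ)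
    (hb : b ≠ 0) (hq1 : ∃ n : ℤ, q.re / b = (n : ℝ) / 2)
    (hq2 : ¬∃ n : ℤ, q.im + q.re * a / b = (n : ℝ)) :
    ∃ K : ℝ, 0 < K ∧ ∀ (k n : ℤ),
      K ≤ ‖((k : ℂ) + ((a : ℂ) + (b : ℂ) * Complex.I) * ((n : ℂ) / 2)
            - Complex.I * q)‖ := by
  obtain ⟨n₀, hn₀⟩ := hq1
  set c : ℝ := q.im + q.re * a / b with hc
  have hqre : q.re = b * n₀ / 2 := by field_simp at hn₀; linarith
  have hfloor : (⌊c⌋ : ℝ) + Int.fract c = c := Int.floor_add_fract c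
  have hfrac1 : Int.fract c < 1 := Int.fract_lt_one c
  have hfrac0 : 0 < Int.fract c := by
    rcases eq_or_lt_of_le (Int.fract_nonneg c) with h | h
    · exact absurd ⟨⌊c⌋, by linarith⟩ hq2
    · exact h
  refine ⟨min (|b| / 2) (min (Int.fract c) (1 - Int.fract c)), ?_, ?_⟩
  · have hbp : 0 < |b| := abs_pos.mpr hb
    exact lt_min (by linarith) (lt_min hfrac0 (by linarith))
  · intro k n
    set z : ℂ := (k : ℂ) + ((a : ℂ) + (b : ℂ) * Complex.I) * ((n : ℂ) / 2)
            - Complex.I * q with hz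
    have hre : z.re = k + a * n / 2 + q.im := by
      simp [hz, Complex.add_re, Complex.sub_re, Complex.mul_re, Complex.div_re,
        Complex.normSq, Complex.add_im, Complex.mul_im]
      ring
    have him : z.im = b * n / 2 - q.re := by
      simp [hz, Complex.add_im, Complex.sub_im, Complex.mul_im, Complex.div_im,
        Complex.normSq, Complex.add_re, Complex.mul_re]
      ring
    by_cases hn : n = n₀
    · have hre' : z.re = (k + ⌊c⌋ : ℝ) + Int.fract c := by
        rw [hre, hn]
        have : a * n₀ / 2 = q.re * a / b := by
          rw [hqre]; field_simp
        rw [this]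
        have h2 : (⌊c⌋ : ℝ) + Int.fract c = q.im + q.re * a / b := hc ▸ hfloor
        linarith
      have habs : |z.re| ≤ ‖z‖ := Complex.abs_re_le_norm z
      have key : min (Int.fract c) (1 - Int.fract c) ≤ |z.re| := by
        rcases le_or_gt 0 ((k : ℝ) + ⌊c⌋) with h | h
        · rw [hre', _root_.abs_of_nonneg (by linarith)]
          calc min (Int.fract c) (1 - Int.fract c) ≤ Int.fract c := min_le_left _ _
            _ ≤ _ := by linarith
        · have hk1 : (k : ℝ) + ⌊c⌋ ≤ -1 := by
            have : (k + ⌊c⌋ : ℤ) < 0 := by exact_mod_cast (by push_cast; linarith : ((k + ⌊c⌋ : ℤ) : ℝ) < 0)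
            have : (k + ⌊c⌋ : ℤ) ≤ -1 := by omega
            exact_mod_cast this
          rw [hre', abs_of_nonpos (by linarith)]
          calc min (Int.fract c) (1 - Int.fract c) ≤ 1 - Int.fract c := min_le_right _ _
            _ ≤ _ := by linarith
      calc min (|b| / 2) (min (Int.fract c) (1 - Int.fract c))
          ≤ min (Int.fract c) (1 - Int.fract c) := min_le_right _ _
        _ ≤ |z.re| := key
        _ ≤ _ := habs
    · have him' : z.im = b * ((n : ℝ) - n₀) / 2 := by rw [him, hqre]; ring
      have h1 : (1 : ℝ) ≤ |(n : ℝ) - n₀| := by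
        have h0 : (1 : ℤ) ≤ |n - n₀| := Int.one_le_abs (sub_ne_zero.mpr hn)
        calc (1 : ℝ) = ((1 : ℤ) : ℝ) := by norm_num
          _ ≤ |((n - n₀ : ℤ) : ℝ)| := by rw [← Int.cast_abs]; exact_mod_cast h0
          _ = |(n : ℝ) - n₀| := by push_cast; ring_nf
      have habs : |z.im| ≤ ‖z‖ := Complex.abs_im_le_norm z
      have hbpos : 0 < |b| := abs_pos.mpr hb
      have : |b| / 2 ≤ |z.im| := by
        rw [him', abs_div, abs_mul]
        rw [_root_.abs_of_nonneg (by norm_num : (0:ℝ) ≤ 2)]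
        calc |b| / 2 = |b| * 1 / 2 := by ring
          _ ≤ |b| * |(n : ℝ) - n₀| / 2 := by
              apply div_le_div_of_nonneg_right _ (by norm_num)
              exact mul_le_mul_of_nonneg_left h1 (le_of_lt hbpos)
          _ = _ := by norm_num
      calc min (|b| / 2) (min (Int.fract c) (1 - Int.fract c)) ≤ |b| / 2 := min_le_left _ _
        _ ≤ |z.im| := this
        _ ≤ _ := habs
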